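/- For the Bateman system, the function Θ₁ = (1/(2γ))·log(p_x² + ω²y²) + (1/ω)·arctan(p_x/(ω y)) satisfies {Θ₁, H_B} = 0 on the open set where y ≠ 0 and p_x² + ω²y² > 0. -/

import Mathlib

/-- Canonical Poisson bracket on ℝ⁴ in coordinates (x, y, p_x, p_y). -/
noncomputable def poissonBracketB (F G : ℝ → ℝ → ℝ → ℝ → ℝ) (x y px py : ℝ) : ℝ :=
  deriv (fun s => F s y px py) x * deriv (fun s => G x y s py) px
  - deriv (fun s => F x y s py) px * deriv (fun s => G s y px py) x
  + deriv (fun s => F x s px py) y * deriv (fun s => G x y px s) py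
  - deriv (fun s => F x y px s) py * deriv (fun s => G x s px py) y

/-- Θ₁ = (1/(2γ))·log(p_x² + ω²y²) + (1/ω)·arctan(p_x/(ωy)) Poisson-commutes
with the Bateman Hamiltonian where y ≠ 0 and p_x² + ω²y² > 0. -/
theorem bateman_theta1_conserved
    (γ ω : ℝ) (hγ : 0 < γ) (hω : 0 < ω)
    (HB Θ1 : ℝ → ℝ → ℝ → ℝ → ℝ)
    (hHB : HB = fun x y px py => px * py + ω ^ 2 * x * y - γ * (x * px - y * py))
    (hΘ1 : Θ1 = fun x y px py =>
      (1 / (2 * γ)) * Real.log (px ^ 2 + ω ^ 2 * y ^ 2)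
      + (1 / ω) * Real.arctan (px / (ω * y))) :
    ∀ x y px py : ℝ, y ≠ 0 → 0 < px ^ 2 + ω ^ 2 * y ^ 2 →
      poissonBracketB Θ1 HB x y px py = 0 := by
  intro x y px py hy hQ
  subst hHB hΘ1
  have hγ' : γ ≠ 0 := ne_of_gt hγ
  have hω' : ω ≠ 0 := ne_of_gt hω
  have hQ' : px ^ 2 + ω ^ 2 * y ^ 2 ≠ 0 := ne_of_gt hQ
  have hωy : ω * y ≠ 0 := mul_ne_zero hω' hy
  have hden : (1 + (px / (ω * y)) ^ 2) ≠ 0 := by positivity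
  -- derivative of Θ1 in px
  have hp1 : HasDerivAt (fun s : ℝ => s ^ 2 + ω ^ 2 * y ^ 2) (2 * px) px := by
    simpa using (hasDerivAt_pow 2 px).add_const (ω ^ 2 * y ^ 2)
  have hp2 : HasDerivAt (fun s : ℝ => Real.log (s ^ 2 + ω ^ 2 * y ^ 2))
      (2 * px / (px ^ 2 + ω ^ 2 * y ^ 2)) px := hp1.log hQ'
  have hp3 : HasDerivAt (fun s : ℝ => s / (ω * y)) (1 / (ω * y)) px := by
    simpa using (hasDerivAt_id px).div_const (ω * y)
  have hp4 : HasDerivAt (fun s : ℝ => Real.arctan (s / (ω * y)))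
      (1 / (1 + (px / (ω * y)) ^ 2) * (1 / (ω * y))) px :=
    by have := (Real.hasDerivAt_arctan (px / (ω * y))).comp px hp3; exact this
  have hFpx : HasDerivAt (fun s : ℝ =>
      (1 / (2 * γ)) * Real.log (s ^ 2 + ω ^ 2 * y ^ 2)
        + (1 / ω) * Real.arctan (s / (ω * y)))
      ((1 / (2 * γ)) * (2 * px / (px ^ 2 + ω ^ 2 * y ^ 2))
        + (1 / ω) * (1 / (1 + (px / (ω * y)) ^ 2) * (1 / (ω * y)))) px :=
    (hp2.const_mul _).add (hp4.const_mul _)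
  -- derivative of Θ1 in y
  have hy1 : HasDerivAt (fun s : ℝ => px ^ 2 + ω ^ 2 * s ^ 2) (ω ^ 2 * (2 * y)) y := by
    simpa using (((hasDerivAt_pow 2 y).const_mul (ω ^ 2)).const_add (px ^ 2))
  have hy2 : HasDerivAt (fun s : ℝ => Real.log (px ^ 2 + ω ^ 2 * s ^ 2))
      (ω ^ 2 * (2 * y) / (px ^ 2 + ω ^ 2 * y ^ 2)) y := hy1.log hQ'
  have hy3a : HasDerivAt (fun s : ℝ => ω * s) ω y := by
    simpa using (hasDerivAt_id y).const_mul ω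
  have hy3 : HasDerivAt (fun s : ℝ => px / (ω * s))
      ((0 * (ω * y) - px * ω) / (ω * y) ^ 2) y :=
    (hasDerivAt_const y px).div hy3a hωy
  have hy4 : HasDerivAt (fun s : ℝ => Real.arctan (px / (ω * s)))
      (1 / (1 + (px / (ω * y)) ^ 2) * ((0 * (ω * y) - px * ω) / (ω * y) ^ 2)) y :=
    by have := (Real.hasDerivAt_arctan (px / (ω * y))).comp y hy3; exact this
  have hFy : HasDerivAt (fun s : ℝ =>
      (1 / (2 * γ)) * Real.log (px ^ 2 + ω ^ 2 * s ^ 2)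
        + (1 / ω) * Real.arctan (px / (ω * s)))
      ((1 / (2 * γ)) * (ω ^ 2 * (2 * y) / (px ^ 2 + ω ^ 2 * y ^ 2))
        + (1 / ω) * (1 / (1 + (px / (ω * y)) ^ 2) * ((0 * (ω * y) - px * ω) / (ω * y) ^ 2))) y :=
    (hy2.const_mul _).add (hy4.const_mul _)
  -- derivatives of HB
  have hGx : HasDerivAt (fun s : ℝ => px * py + ω ^ 2 * s * y - γ * (s * px - y * py))
      (ω ^ 2 * y - γ * px) x := by
    have h : (fun s : ℝ => px * py + ω ^ 2 * s * y - γ * (s * px - y * py))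
        = fun s => (ω ^ 2 * y - γ * px) * s + (px * py + γ * (y * py)) := by
      funext s; ring
    rw [h]
    simpa using ((hasDerivAt_id x).const_mul (ω ^ 2 * y - γ * px)).add_const
      (px * py + γ * (y * py))
  have hGpy' : HasDerivAt (fun s : ℝ => px * s + ω ^ 2 * x * y - γ * (x * px - y * s))
      (px + γ * y) py := by
    have h : (fun s : ℝ => px * s + ω ^ 2 * x * y - γ * (x * px - y * s))
        = fun s => (px + γ * y) * s + (ω ^ 2 * x * y - γ * (x * px)) := by
      funext s; ring
    rw [h]
    simpa using ((hasDerivAt_id py).const_mul (px + γ * y)).add_const (ω ^ 2 * x * y - γ * (x * px))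
  simp only [poissonBracketB]
  rw [hFpx.deriv, hFy.deriv, hGx.deriv, hGpy'.deriv]
  simp only [deriv_const']
  rw [zero_mul]
  have key : (1 + (px / (ω * y)) ^ 2) = (px ^ 2 + ω ^ 2 * y ^ 2) / (ω * y) ^ 2 := by
    field_simp; ring
  rw [key]
  field_simp
  ring
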